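/- Let Ω = {ξ + iη ∈ ℂ : η > (1/2)·cosh(2ξ)} and define u : Ω → ℂ by u(ξ + iη) = (η²·tanh(2ξ) + ξ/2) + i·(η²/cosh(2ξ) − (1/4)·cosh(2ξ)). Then: (i) Im u(ζ) > 0 for all ζ ∈ Ω, so u maps Ω into the upper half-plane H = {w : Im w > 0}; (ii) u is a harmonic map with respect to the hyperbolic metric on H given by F(w) = −2·log(Im w), i.e. u_{ζζ̄} + (F_w ∘ u)·u_ζ·u_{ζ̄} = 0 on Ω; (iii) the Hopf density of u is identically 1: u_ζ(ζ)·(ū)_ζ(ζ) = (Im u(ζ))², i.e. e^{F∘u}·u_ζ·(ū)_ζ = 1 on Ω. -/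

import Mathlib

open Complex Real

/-- Wirtinger derivative `∂f/∂z = (1/2)(∂f/∂x − i ∂f/∂y)`, defined from the real
Fréchet derivative. -/
noncomputable def wderiv (f : ℂ → ℂ) (z : ℂ) : ℂ :=
  (fderiv ℝ f z 1 - Complex.I * fderiv ℝ f z Complex.I) / 2

/-- Wirtinger derivative `∂f/∂z̄ = (1/2)(∂f/∂x + i ∂f/∂y)`, defined from the real
Fréchet derivative. -/
noncomputable def wderivBar (f : ℂ → ℂ) (z : ℂ) : ℂ :=
  (fderiv ℝ f z 1 + Complex.I * fderiv ℝ f z Complex.I) / 2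

noncomputable def Ufun : ℂ → ℂ := fun ζ =>
  ((ζ.im ^ 2 * Real.tanh (2 * ζ.re) + ζ.re / 2 : ℝ) : ℂ)
    + Complex.I * ((ζ.im ^ 2 / Real.cosh (2 * ζ.re) - Real.cosh (2 * ζ.re) / 4 : ℝ) : ℂ)

noncomputable def Vfun : ℂ → ℂ := fun ζ =>
  (((ζ.im / Real.cosh (2 * ζ.re) - 1 / 2) ^ 2 : ℝ) : ℂ)
    + Complex.I * ((-(ζ.im / Real.cosh (2 * ζ.re) - 1 / 2) ^ 2 * Real.sinh (2 * ζ.re) : ℝ) : ℂ)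

lemma fd_eq {f : ℂ → ℂ} {z v A : ℂ} (hf : DifferentiableAt ℝ f z)
    (h : HasDerivAt (fun t : ℝ => f (z + t • v)) A 0) : fderiv ℝ f z v = A :=
  HasDerivAt.unique (hf.hasFDerivAt.hasLineDerivAt v) h

lemma line_hd {P Q : ℝ → ℝ} {p q : ℝ} (hP : HasDerivAt P p 0) (hQ : HasDerivAt Q q 0) :
    HasDerivAt (fun t : ℝ => ((P t : ℝ) : ℂ) + Complex.I * ((Q t : ℝ) : ℂ))
      ((p : ℂ) + Complex.I * (q : ℂ)) 0 :=
  hP.ofReal_comp.add (hQ.ofReal_comp.const_mul Complex.I)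

lemma wderiv_val {f : ℂ → ℂ} {z : ℂ} {p1 q1 p2 q2 : ℝ} (hf : DifferentiableAt ℝ f z)
    (h1 : HasDerivAt (fun t : ℝ => f (z + t • (1 : ℂ))) ((p1 : ℂ) + Complex.I * (q1 : ℂ)) 0)
    (h2 : HasDerivAt (fun t : ℝ => f (z + t • Complex.I)) ((p2 : ℂ) + Complex.I * (q2 : ℂ)) 0) :
    wderiv f z = (((p1 + q2) / 2 : ℝ) : ℂ) + Complex.I * (((q1 - p2) / 2 : ℝ) : ℂ) := by
  unfold wderiv
  rw [fd_eq hf h1, fd_eq hf h2]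
  push_cast
  linear_combination (-(q2 : ℂ) / 2) * Complex.I_sq

lemma wderivBar_val {f : ℂ → ℂ} {z : ℂ} {p1 q1 p2 q2 : ℝ} (hf : DifferentiableAt ℝ f z)
    (h1 : HasDerivAt (fun t : ℝ => f (z + t • (1 : ℂ))) ((p1 : ℂ) + Complex.I * (q1 : ℂ)) 0)
    (h2 : HasDerivAt (fun t : ℝ => f (z + t • Complex.I)) ((p2 : ℂ) + Complex.I * (q2 : ℂ)) 0) :
    wderivBar f z = (((p1 - q2) / 2 : ℝ) : ℂ) + Complex.I * (((q1 + p2) / 2 : ℝ) : ℂ) := by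
  unfold wderivBar
  rw [fd_eq hf h1, fd_eq hf h2]
  push_cast
  linear_combination ((q2 : ℂ) / 2) * Complex.I_sq

-- real one-dimensional derivative building blocks
lemma hdX (x : ℝ) : HasDerivAt (fun t : ℝ => x + t) 1 0 := by
  simpa using (hasDerivAt_id (0 : ℝ)).const_add x

lemma hd2X (x : ℝ) : HasDerivAt (fun t : ℝ => 2 * (x + t)) 2 0 := by
  simpa using (hdX x).const_mul 2

lemma hdC (x : ℝ) :
    HasDerivAt (fun t : ℝ => Real.cosh (2 * (x + t))) (2 * Real.sinh (2 * x)) 0 := by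
  have h := (Real.hasDerivAt_cosh (2 * (x + 0))).comp 0 (hd2X x)
  simpa [Function.comp_def, mul_comm] using h

lemma hdS (x : ℝ) :
    HasDerivAt (fun t : ℝ => Real.sinh (2 * (x + t))) (2 * Real.cosh (2 * x)) 0 := by
  have h := (Real.hasDerivAt_sinh (2 * (x + 0))).comp 0 (hd2X x)
  simpa [Function.comp_def, mul_comm] using h

lemma hdU1P (x y : ℝ) :
    HasDerivAt (fun t : ℝ => y ^ 2 * Real.tanh (2 * (x + t)) + (x + t) / 2)
      (2 * y ^ 2 / Real.cosh (2 * x) ^ 2 + 1 / 2) 0 := by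
  simp only [Real.tanh_eq_sinh_div_cosh]
  have h := (((hdS x).div (hdC x) (Real.cosh_pos _).ne').const_mul (y ^ 2)).add
    ((hdX x).div_const 2)
  refine h.congr_deriv (Eq.symm ?_)
  have key := Real.cosh_sq_sub_sinh_sq (2 * x)
  have hc := (Real.cosh_pos (2 * x)).ne'
  simp only [add_zero]
  set c := Real.cosh (2 * x) with hcd
  set s := Real.sinh (2 * x) with hsd
  field_simp
  linear_combination (-4 * y ^ 2) * key

lemma hdU1Q (x y : ℝ) :
    HasDerivAt (fun t : ℝ => y ^ 2 / Real.cosh (2 * (x + t)) - Real.cosh (2 * (x + t)) / 4)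
      (-(2 * y ^ 2 * Real.sinh (2 * x) / Real.cosh (2 * x) ^ 2) - Real.sinh (2 * x) / 2) 0 := by
  have h := (((hasDerivAt_const (0:ℝ) (y ^ 2)).div (hdC x) (Real.cosh_pos _).ne')).sub
    ((hdC x).div_const 4)
  refine h.congr_deriv (Eq.symm ?_)
  have hc := (Real.cosh_pos (2 * x)).ne'
  simp only [add_zero]
  field_simp
  ring

lemma hdU2P (x y : ℝ) :
    HasDerivAt (fun t : ℝ => (y + t) ^ 2 * Real.tanh (2 * x) + x / 2)
      (2 * y * (Real.sinh (2 * x) / Real.cosh (2 * x))) 0 := by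
  simp only [Real.tanh_eq_sinh_div_cosh]
  have h := (((hdX y).pow 2).mul_const (Real.sinh (2 * x) / Real.cosh (2 * x))).add_const (x / 2)
  refine h.congr_deriv (Eq.symm ?_)
  simp only [add_zero]
  norm_num

lemma hdU2Q (x y : ℝ) :
    HasDerivAt (fun t : ℝ => (y + t) ^ 2 / Real.cosh (2 * x) - Real.cosh (2 * x) / 4)
      (2 * y / Real.cosh (2 * x)) 0 := by
  have h := (((hdX y).pow 2).div_const (Real.cosh (2 * x))).sub_const (Real.cosh (2 * x) / 4)
  refine h.congr_deriv (Eq.symm ?_)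
  simp only [add_zero]
  norm_num

lemma hdV1P (x y : ℝ) :
    HasDerivAt (fun t : ℝ => (y / Real.cosh (2 * (x + t)) - 1 / 2) ^ 2)
      (-(4 * y * Real.sinh (2 * x) * (y / Real.cosh (2 * x) - 1 / 2) / Real.cosh (2 * x) ^ 2)) 0 := by
  have h := (((hasDerivAt_const (0:ℝ) y).div (hdC x) (Real.cosh_pos _).ne').sub_const
    ((1:ℝ)/2)).pow 2
  refine h.congr_deriv (Eq.symm ?_)
  have hc := (Real.cosh_pos (2 * x)).ne'
  simp only [add_zero, Pi.div_apply, Pi.neg_apply, Pi.sub_apply, Nat.cast_ofNat, Nat.reduceSub, pow_one]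
  field_simp
  ring

lemma hdV1Q (x y : ℝ) :
    HasDerivAt (fun t : ℝ => -(y / Real.cosh (2 * (x + t)) - 1 / 2) ^ 2 * Real.sinh (2 * (x + t)))
      (4 * y * Real.sinh (2 * x) ^ 2 * (y / Real.cosh (2 * x) - 1 / 2) / Real.cosh (2 * x) ^ 2
        - 2 * (y / Real.cosh (2 * x) - 1 / 2) ^ 2 * Real.cosh (2 * x)) 0 := by
  have h := ((hdV1P x y).neg).mul (hdS x)
  refine h.congr_deriv (Eq.symm ?_)
  have hc := (Real.cosh_pos (2 * x)).ne'
  simp only [add_zero, Pi.div_apply, Pi.neg_apply, Pi.sub_apply]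
  field_simp
  ring

lemma hdV2P (x y : ℝ) :
    HasDerivAt (fun t : ℝ => ((y + t) / Real.cosh (2 * x) - 1 / 2) ^ 2)
      (2 * (y / Real.cosh (2 * x) - 1 / 2) / Real.cosh (2 * x)) 0 := by
  have h := (((hdX y).div_const (Real.cosh (2 * x))).sub_const ((1:ℝ)/2)).pow 2
  refine h.congr_deriv (Eq.symm ?_)
  have hc := (Real.cosh_pos (2 * x)).ne'
  simp only [add_zero, Pi.div_apply, Pi.neg_apply, Pi.sub_apply, Nat.cast_ofNat, Nat.reduceSub, pow_one]
  field_simp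

lemma hdV2Q (x y : ℝ) :
    HasDerivAt (fun t : ℝ => -((y + t) / Real.cosh (2 * x) - 1 / 2) ^ 2 * Real.sinh (2 * x))
      (-(2 * (y / Real.cosh (2 * x) - 1 / 2) * Real.sinh (2 * x) / Real.cosh (2 * x))) 0 := by
  have h := ((hdV2P x y).neg).mul_const (Real.sinh (2 * x))
  refine h.congr_deriv (Eq.symm ?_)
  have hc := (Real.cosh_pos (2 * x)).ne'
  field_simp

lemma hdF2 (b : ℝ) (hb : b ≠ 0) :
    HasDerivAt (fun t : ℝ => -2 * Real.log (b + t)) (-2 / b) 0 := by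
  have h0 : (b + 0) ≠ 0 := by simpa using hb
  have h := ((Real.hasDerivAt_log h0).comp 0 (hdX b)).const_mul (-2 : ℝ)
  simpa [Function.comp, div_eq_mul_inv] using h

-- differentiability
lemma diffU : Differentiable ℝ Ufun := by
  unfold Ufun
  simp only [Real.tanh_eq_sinh_div_cosh, div_eq_mul_inv]
  have hre : Differentiable ℝ (fun ζ : ℂ => ζ.re) := Complex.reCLM.differentiable
  have him : Differentiable ℝ (fun ζ : ℂ => ζ.im) := Complex.imCLM.differentiable
  have hc : Differentiable ℝ (fun ζ : ℂ => Real.cosh (2 * ζ.re)) :=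
    Real.differentiable_cosh.comp (hre.const_mul 2)
  have hs : Differentiable ℝ (fun ζ : ℂ => Real.sinh (2 * ζ.re)) :=
    Real.differentiable_sinh.comp (hre.const_mul 2)
  have hcne : ∀ ζ : ℂ, Real.cosh (2 * ζ.re) ≠ 0 := fun ζ => (Real.cosh_pos _).ne'
  have h1 : Differentiable ℝ
      (fun ζ : ℂ => ζ.im ^ 2 * (Real.sinh (2 * ζ.re) * (Real.cosh (2 * ζ.re))⁻¹) + ζ.re * 2⁻¹) :=
    ((him.pow 2).mul (hs.mul (hc.inv hcne))).add (hre.mul_const _)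
  have h2 : Differentiable ℝ
      (fun ζ : ℂ => ζ.im ^ 2 * (Real.cosh (2 * ζ.re))⁻¹ - Real.cosh (2 * ζ.re) * 4⁻¹) :=
    ((him.pow 2).mul (hc.inv hcne)).sub (hc.mul_const _)
  exact (Complex.ofRealCLM.differentiable.comp h1).add
    ((Complex.ofRealCLM.differentiable.comp h2).const_mul Complex.I)

lemma diffV : Differentiable ℝ Vfun := by
  unfold Vfun
  simp only [div_eq_mul_inv]
  have hre : Differentiable ℝ (fun ζ : ℂ => ζ.re) := Complex.reCLM.differentiable
  have him : Differentiable ℝ (fun ζ : ℂ => ζ.im) := Complex.imCLM.differentiable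
  have hc : Differentiable ℝ (fun ζ : ℂ => Real.cosh (2 * ζ.re)) :=
    Real.differentiable_cosh.comp (hre.const_mul 2)
  have hs : Differentiable ℝ (fun ζ : ℂ => Real.sinh (2 * ζ.re)) :=
    Real.differentiable_sinh.comp (hre.const_mul 2)
  have hcne : ∀ ζ : ℂ, Real.cosh (2 * ζ.re) ≠ 0 := fun ζ => (Real.cosh_pos _).ne'
  have hg : Differentiable ℝ
      (fun ζ : ℂ => (ζ.im * (Real.cosh (2 * ζ.re))⁻¹ - 1 * 2⁻¹) ^ 2) :=
    ((him.mul (hc.inv hcne)).sub_const _).pow 2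
  have h2 : Differentiable ℝ
      (fun ζ : ℂ => -(ζ.im * (Real.cosh (2 * ζ.re))⁻¹ - 1 * 2⁻¹) ^ 2 * Real.sinh (2 * ζ.re)) :=
    (hg.neg).mul hs
  exact (Complex.ofRealCLM.differentiable.comp hg).add
    ((Complex.ofRealCLM.differentiable.comp h2).const_mul Complex.I)

lemma conjU_eq : (fun w : ℂ => (starRingEnd ℂ) (Ufun w)) = fun w => Complex.conjCLE (Ufun w) := by
  funext w; simp

lemma diffConjU : Differentiable ℝ (fun w : ℂ => (starRingEnd ℂ) (Ufun w)) := by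
  rw [conjU_eq]
  exact Complex.conjCLE.differentiable.comp diffU

-- line function rewrites
lemma lre1 (ζ : ℂ) (t : ℝ) : (ζ + t • (1 : ℂ)).re = ζ.re + t := by
  simp [Complex.real_smul]
lemma lim1 (ζ : ℂ) (t : ℝ) : (ζ + t • (1 : ℂ)).im = ζ.im := by
  simp [Complex.real_smul]
lemma lreI (ζ : ℂ) (t : ℝ) : (ζ + t • Complex.I).re = ζ.re := by
  simp [Complex.real_smul]
lemma limI (ζ : ℂ) (t : ℝ) : (ζ + t • Complex.I).im = ζ.im + t := by
  simp [Complex.real_smul]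

lemma U_line1 (ζ : ℂ) : (fun t : ℝ => Ufun (ζ + t • (1 : ℂ)))
    = fun t : ℝ => ((ζ.im ^ 2 * Real.tanh (2 * (ζ.re + t)) + (ζ.re + t) / 2 : ℝ) : ℂ)
        + Complex.I * ((ζ.im ^ 2 / Real.cosh (2 * (ζ.re + t))
            - Real.cosh (2 * (ζ.re + t)) / 4 : ℝ) : ℂ) := by
  funext t; simp only [Ufun, lre1, lim1]

lemma U_lineI (ζ : ℂ) : (fun t : ℝ => Ufun (ζ + t • Complex.I))
    = fun t : ℝ => (((ζ.im + t) ^ 2 * Real.tanh (2 * ζ.re) + ζ.re / 2 : ℝ) : ℂ)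
        + Complex.I * (((ζ.im + t) ^ 2 / Real.cosh (2 * ζ.re)
            - Real.cosh (2 * ζ.re) / 4 : ℝ) : ℂ) := by
  funext t; simp only [Ufun, lreI, limI]

lemma V_line1 (ζ : ℂ) : (fun t : ℝ => Vfun (ζ + t • (1 : ℂ)))
    = fun t : ℝ => (((ζ.im / Real.cosh (2 * (ζ.re + t)) - 1 / 2) ^ 2 : ℝ) : ℂ)
        + Complex.I * ((-(ζ.im / Real.cosh (2 * (ζ.re + t)) - 1 / 2) ^ 2
            * Real.sinh (2 * (ζ.re + t)) : ℝ) : ℂ) := by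
  funext t; simp only [Vfun, lre1, lim1]

lemma V_lineI (ζ : ℂ) : (fun t : ℝ => Vfun (ζ + t • Complex.I))
    = fun t : ℝ => ((((ζ.im + t) / Real.cosh (2 * ζ.re) - 1 / 2) ^ 2 : ℝ) : ℂ)
        + Complex.I * ((-((ζ.im + t) / Real.cosh (2 * ζ.re) - 1 / 2) ^ 2
            * Real.sinh (2 * ζ.re) : ℝ) : ℂ) := by
  funext t; simp only [Vfun, lreI, limI]

lemma wderiv_Ufun (ζ : ℂ) :
    wderiv Ufun ζ
      = (((ζ.im / Real.cosh (2 * ζ.re) + 1 / 2) ^ 2 : ℝ) : ℂ)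
        + Complex.I * ((-(ζ.im / Real.cosh (2 * ζ.re) + 1 / 2) ^ 2
            * Real.sinh (2 * ζ.re) : ℝ) : ℂ) := by
  have h1 : HasDerivAt (fun t : ℝ => Ufun (ζ + t • (1 : ℂ)))
      (((2 * ζ.im ^ 2 / Real.cosh (2 * ζ.re) ^ 2 + 1 / 2 : ℝ) : ℂ)
        + Complex.I * ((-(2 * ζ.im ^ 2 * Real.sinh (2 * ζ.re) / Real.cosh (2 * ζ.re) ^ 2)
            - Real.sinh (2 * ζ.re) / 2 : ℝ) : ℂ)) 0 := by
    rw [U_line1]; exact line_hd (hdU1P ζ.re ζ.im) (hdU1Q ζ.re ζ.im)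
  have h2 : HasDerivAt (fun t : ℝ => Ufun (ζ + t • Complex.I))
      (((2 * ζ.im * (Real.sinh (2 * ζ.re) / Real.cosh (2 * ζ.re)) : ℝ) : ℂ)
        + Complex.I * ((2 * ζ.im / Real.cosh (2 * ζ.re) : ℝ) : ℂ)) 0 := by
    rw [U_lineI]; exact line_hd (hdU2P ζ.re ζ.im) (hdU2Q ζ.re ζ.im)
  rw [wderiv_val (diffU ζ) h1 h2]
  have hc := (Real.cosh_pos (2 * ζ.re)).ne'
  have e1 : (2 * ζ.im ^ 2 / Real.cosh (2 * ζ.re) ^ 2 + 1 / 2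
        + 2 * ζ.im / Real.cosh (2 * ζ.re)) / 2
      = (ζ.im / Real.cosh (2 * ζ.re) + 1 / 2) ^ 2 := by
    field_simp; ring
  have e2 : (-(2 * ζ.im ^ 2 * Real.sinh (2 * ζ.re) / Real.cosh (2 * ζ.re) ^ 2)
        - Real.sinh (2 * ζ.re) / 2
        - 2 * ζ.im * (Real.sinh (2 * ζ.re) / Real.cosh (2 * ζ.re))) / 2
      = -(ζ.im / Real.cosh (2 * ζ.re) + 1 / 2) ^ 2 * Real.sinh (2 * ζ.re) := by
    field_simp; ring
  rw [e1, e2]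

lemma wderivBar_Ufun (ζ : ℂ) : wderivBar Ufun ζ = Vfun ζ := by
  have h1 : HasDerivAt (fun t : ℝ => Ufun (ζ + t • (1 : ℂ)))
      (((2 * ζ.im ^ 2 / Real.cosh (2 * ζ.re) ^ 2 + 1 / 2 : ℝ) : ℂ)
        + Complex.I * ((-(2 * ζ.im ^ 2 * Real.sinh (2 * ζ.re) / Real.cosh (2 * ζ.re) ^ 2)
            - Real.sinh (2 * ζ.re) / 2 : ℝ) : ℂ)) 0 := by
    rw [U_line1]; exact line_hd (hdU1P ζ.re ζ.im) (hdU1Q ζ.re ζ.im)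
  have h2 : HasDerivAt (fun t : ℝ => Ufun (ζ + t • Complex.I))
      (((2 * ζ.im * (Real.sinh (2 * ζ.re) / Real.cosh (2 * ζ.re)) : ℝ) : ℂ)
        + Complex.I * ((2 * ζ.im / Real.cosh (2 * ζ.re) : ℝ) : ℂ)) 0 := by
    rw [U_lineI]; exact line_hd (hdU2P ζ.re ζ.im) (hdU2Q ζ.re ζ.im)
  rw [wderivBar_val (diffU ζ) h1 h2]
  unfold Vfun
  have hc := (Real.cosh_pos (2 * ζ.re)).ne'
  have e1 : (2 * ζ.im ^ 2 / Real.cosh (2 * ζ.re) ^ 2 + 1 / 2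
        - 2 * ζ.im / Real.cosh (2 * ζ.re)) / 2
      = (ζ.im / Real.cosh (2 * ζ.re) - 1 / 2) ^ 2 := by
    field_simp; ring
  have e2 : (-(2 * ζ.im ^ 2 * Real.sinh (2 * ζ.re) / Real.cosh (2 * ζ.re) ^ 2)
        - Real.sinh (2 * ζ.re) / 2
        + 2 * ζ.im * (Real.sinh (2 * ζ.re) / Real.cosh (2 * ζ.re))) / 2
      = -(ζ.im / Real.cosh (2 * ζ.re) - 1 / 2) ^ 2 * Real.sinh (2 * ζ.re) := by
    field_simp; ring
  rw [e1, e2]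

lemma wderiv_Vfun (ζ : ℂ) :
    wderiv Vfun ζ
      = ((-(2 * Real.sinh (2 * ζ.re)
            * ((ζ.im / Real.cosh (2 * ζ.re)) ^ 2 - 1 / 4) / Real.cosh (2 * ζ.re)) : ℝ) : ℂ)
        + Complex.I * ((-((2 - Real.cosh (2 * ζ.re) ^ 2)
            * ((ζ.im / Real.cosh (2 * ζ.re)) ^ 2 - 1 / 4) / Real.cosh (2 * ζ.re)) : ℝ) : ℂ) := by
  have h1 : HasDerivAt (fun t : ℝ => Vfun (ζ + t • (1 : ℂ)))
      (((-(4 * ζ.im * Real.sinh (2 * ζ.re) * (ζ.im / Real.cosh (2 * ζ.re) - 1 / 2)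
            / Real.cosh (2 * ζ.re) ^ 2) : ℝ) : ℂ)
        + Complex.I * ((4 * ζ.im * Real.sinh (2 * ζ.re) ^ 2
              * (ζ.im / Real.cosh (2 * ζ.re) - 1 / 2) / Real.cosh (2 * ζ.re) ^ 2
            - 2 * (ζ.im / Real.cosh (2 * ζ.re) - 1 / 2) ^ 2 * Real.cosh (2 * ζ.re) : ℝ) : ℂ)) 0 := by
    rw [V_line1]; exact line_hd (hdV1P ζ.re ζ.im) (hdV1Q ζ.re ζ.im)
  have h2 : HasDerivAt (fun t : ℝ => Vfun (ζ + t • Complex.I))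
      (((2 * (ζ.im / Real.cosh (2 * ζ.re) - 1 / 2) / Real.cosh (2 * ζ.re) : ℝ) : ℂ)
        + Complex.I * ((-(2 * (ζ.im / Real.cosh (2 * ζ.re) - 1 / 2)
            * Real.sinh (2 * ζ.re) / Real.cosh (2 * ζ.re)) : ℝ) : ℂ)) 0 := by
    rw [V_lineI]; exact line_hd (hdV2P ζ.re ζ.im) (hdV2Q ζ.re ζ.im)
  rw [wderiv_val (diffV ζ) h1 h2]
  have hc := (Real.cosh_pos (2 * ζ.re)).ne'
  have key := Real.cosh_sq_sub_sinh_sq (2 * ζ.re)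
  have e1 : (-(4 * ζ.im * Real.sinh (2 * ζ.re) * (ζ.im / Real.cosh (2 * ζ.re) - 1 / 2)
          / Real.cosh (2 * ζ.re) ^ 2)
        + -(2 * (ζ.im / Real.cosh (2 * ζ.re) - 1 / 2)
            * Real.sinh (2 * ζ.re) / Real.cosh (2 * ζ.re))) / 2
      = -(2 * Real.sinh (2 * ζ.re) * ((ζ.im / Real.cosh (2 * ζ.re)) ^ 2 - 1 / 4)
          / Real.cosh (2 * ζ.re)) := by
    field_simp; ring
  have e2 : (4 * ζ.im * Real.sinh (2 * ζ.re) ^ 2 * (ζ.im / Real.cosh (2 * ζ.re) - 1 / 2)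
          / Real.cosh (2 * ζ.re) ^ 2
        - 2 * (ζ.im / Real.cosh (2 * ζ.re) - 1 / 2) ^ 2 * Real.cosh (2 * ζ.re)
        - 2 * (ζ.im / Real.cosh (2 * ζ.re) - 1 / 2) / Real.cosh (2 * ζ.re)) / 2
      = -((2 - Real.cosh (2 * ζ.re) ^ 2) * ((ζ.im / Real.cosh (2 * ζ.re)) ^ 2 - 1 / 4)
          / Real.cosh (2 * ζ.re)) := by
    set c := Real.cosh (2 * ζ.re) with hcd
    set s := Real.sinh (2 * ζ.re) with hsd
    field_simp
    linear_combination (-32 * ζ.im ^ 2 + 16 * c * ζ.im) * key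
  rw [e1, e2]

lemma conjU_line1 (ζ : ℂ) : (fun t : ℝ => (starRingEnd ℂ) (Ufun (ζ + t • (1 : ℂ))))
    = fun t : ℝ => ((ζ.im ^ 2 * Real.tanh (2 * (ζ.re + t)) + (ζ.re + t) / 2 : ℝ) : ℂ)
        + Complex.I * ((-(ζ.im ^ 2 / Real.cosh (2 * (ζ.re + t))
            - Real.cosh (2 * (ζ.re + t)) / 4) : ℝ) : ℂ) := by
  funext t
  simp only [Ufun, lre1, lim1, map_add, map_mul, Complex.conj_ofReal, Complex.conj_I,
    Complex.ofReal_neg]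
  ring

lemma conjU_lineI (ζ : ℂ) : (fun t : ℝ => (starRingEnd ℂ) (Ufun (ζ + t • Complex.I)))
    = fun t : ℝ => (((ζ.im + t) ^ 2 * Real.tanh (2 * ζ.re) + ζ.re / 2 : ℝ) : ℂ)
        + Complex.I * ((-((ζ.im + t) ^ 2 / Real.cosh (2 * ζ.re)
            - Real.cosh (2 * ζ.re) / 4) : ℝ) : ℂ) := by
  funext t
  simp only [Ufun, lreI, limI, map_add, map_mul, Complex.conj_ofReal, Complex.conj_I,
    Complex.ofReal_neg]
  ring

lemma wderiv_conjUfun (ζ : ℂ) :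
    wderiv (fun w => (starRingEnd ℂ) (Ufun w)) ζ
      = (((ζ.im / Real.cosh (2 * ζ.re) - 1 / 2) ^ 2 : ℝ) : ℂ)
        + Complex.I * (((ζ.im / Real.cosh (2 * ζ.re) - 1 / 2) ^ 2
            * Real.sinh (2 * ζ.re) : ℝ) : ℂ) := by
  have h1 : HasDerivAt (fun t : ℝ => (starRingEnd ℂ) (Ufun (ζ + t • (1 : ℂ))))
      (((2 * ζ.im ^ 2 / Real.cosh (2 * ζ.re) ^ 2 + 1 / 2 : ℝ) : ℂ)
        + Complex.I * ((-(-(2 * ζ.im ^ 2 * Real.sinh (2 * ζ.re) / Real.cosh (2 * ζ.re) ^ 2)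
            - Real.sinh (2 * ζ.re) / 2) : ℝ) : ℂ)) 0 := by
    rw [conjU_line1]; exact line_hd (hdU1P ζ.re ζ.im) ((hdU1Q ζ.re ζ.im).neg)
  have h2 : HasDerivAt (fun t : ℝ => (starRingEnd ℂ) (Ufun (ζ + t • Complex.I)))
      (((2 * ζ.im * (Real.sinh (2 * ζ.re) / Real.cosh (2 * ζ.re)) : ℝ) : ℂ)
        + Complex.I * ((-(2 * ζ.im / Real.cosh (2 * ζ.re)) : ℝ) : ℂ)) 0 := by
    rw [conjU_lineI]; exact line_hd (hdU2P ζ.re ζ.im) ((hdU2Q ζ.re ζ.im).neg)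
  rw [wderiv_val (diffConjU ζ) h1 h2]
  have hc := (Real.cosh_pos (2 * ζ.re)).ne'
  have e1 : (2 * ζ.im ^ 2 / Real.cosh (2 * ζ.re) ^ 2 + 1 / 2
        + -(2 * ζ.im / Real.cosh (2 * ζ.re))) / 2
      = (ζ.im / Real.cosh (2 * ζ.re) - 1 / 2) ^ 2 := by
    field_simp; ring
  have e2 : (-(-(2 * ζ.im ^ 2 * Real.sinh (2 * ζ.re) / Real.cosh (2 * ζ.re) ^ 2)
          - Real.sinh (2 * ζ.re) / 2)
        - 2 * ζ.im * (Real.sinh (2 * ζ.re) / Real.cosh (2 * ζ.re))) / 2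
      = (ζ.im / Real.cosh (2 * ζ.re) - 1 / 2) ^ 2 * Real.sinh (2 * ζ.re) := by
    field_simp; ring
  rw [e1, e2]

lemma diffF {w : ℂ} (hw : w.im ≠ 0) :
    DifferentiableAt ℝ (fun w : ℂ => ((-2 * Real.log w.im : ℝ) : ℂ)) w := by
  have h0 : DifferentiableAt ℝ (fun w : ℂ => Real.log w.im) w :=
    DifferentiableAt.comp w (Real.differentiableAt_log hw) Complex.imCLM.differentiableAt
  exact Complex.ofRealCLM.differentiableAt.comp w (h0.const_mul (-2))

lemma wderiv_Flog (w : ℂ) (hw : w.im ≠ 0) :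
    wderiv (fun w : ℂ => ((-2 * Real.log w.im : ℝ) : ℂ)) w
      = Complex.I * ((1 / w.im : ℝ) : ℂ) := by
  have h1 : HasDerivAt
      (fun t : ℝ => ((-2 * Real.log ((w + t • (1:ℂ)).im) : ℝ) : ℂ))
      (((0:ℝ) : ℂ) + Complex.I * ((0:ℝ) : ℂ)) 0 := by
    have e : (fun t : ℝ => ((-2 * Real.log ((w + t • (1:ℂ)).im) : ℝ) : ℂ))
        = fun _ : ℝ => ((-2 * Real.log w.im : ℝ) : ℂ) := by
      funext t; rw [lim1]
    rw [e]
    simpa using hasDerivAt_const (0:ℝ) ((-2 * Real.log w.im : ℝ) : ℂ)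
  have h2 : HasDerivAt
      (fun t : ℝ => ((-2 * Real.log ((w + t • Complex.I).im) : ℝ) : ℂ))
      (((-2 / w.im : ℝ) : ℂ) + Complex.I * ((0:ℝ) : ℂ)) 0 := by
    have e : (fun t : ℝ => ((-2 * Real.log ((w + t • Complex.I).im) : ℝ) : ℂ))
        = fun t : ℝ => ((-2 * Real.log (w.im + t) : ℝ) : ℂ)
            + Complex.I * (((0:ℝ) : ℝ) : ℂ) := by
      funext t; rw [limI]; simp
    rw [e]
    exact line_hd (hdF2 w.im hw) (hasDerivAt_const (0:ℝ) (0:ℝ))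
  rw [wderiv_val (diffF hw) h1 h2]
  have hwc : (w.im : ℂ) ≠ 0 := Complex.ofReal_ne_zero.mpr hw
  push_cast
  field_simp
  ring

lemma imU (ζ : ℂ) : (Ufun ζ).im = ζ.im ^ 2 / Real.cosh (2 * ζ.re) - Real.cosh (2 * ζ.re) / 4 := by
  simp only [Ufun, Complex.add_im, Complex.mul_im, Complex.I_re, Complex.I_im,
    Complex.ofReal_re, Complex.ofReal_im]
  ring

/-- The map built from a Bäcklund transform of the one-soliton
sine-Gordon solution,
`u(ξ+iη) = (η² tanh(2ξ) + ξ/2) + i(η²/cosh(2ξ) − cosh(2ξ)/4)` on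
`Ω = {η > cosh(2ξ)/2}`, maps into the upper half-plane, is harmonic for the
hyperbolic metric `F(w) = −2 log(Im w)`, and has Hopf density identically `1`:
`u_ζ (ū)_ζ = (Im u)²`, i.e. `e^{F∘u} u_ζ (ū)_ζ = 1`. -/
theorem backlund_harmonic_map
    (Ω : Set ℂ) (hΩ : Ω = {ζ : ℂ | Real.cosh (2 * ζ.re) / 2 < ζ.im})
    (u : ℂ → ℂ)
    (hu : u = fun ζ =>
      ((ζ.im ^ 2 * Real.tanh (2 * ζ.re) + ζ.re / 2 : ℝ) : ℂ)
        + Complex.I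
            * ((ζ.im ^ 2 / Real.cosh (2 * ζ.re) - Real.cosh (2 * ζ.re) / 4 : ℝ) : ℂ))
    (F : ℂ → ℝ) (hF : F = fun w => -2 * Real.log w.im) :
    (∀ ζ ∈ Ω, 0 < (u ζ).im) ∧
    (∀ ζ ∈ Ω,
      wderiv (fun w => wderivBar u w) ζ
        + wderiv (fun w => ((F w : ℝ) : ℂ)) (u ζ) * wderiv u ζ * wderivBar u ζ = 0) ∧
    (∀ ζ ∈ Ω,
      wderiv u ζ * wderiv (fun w => starRingEnd ℂ (u w)) ζ = (((u ζ).im ^ 2 : ℝ) : ℂ)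
      ∧ Complex.exp ((F (u ζ) : ℂ)) * wderiv u ζ
          * wderiv (fun w => starRingEnd ℂ (u w)) ζ = 1) := by
  have hu' : u = Ufun := hu
  subst hu' hΩ hF
  have hmem : ∀ ζ : ℂ, ζ ∈ {ζ : ℂ | Real.cosh (2 * ζ.re) / 2 < ζ.im} →
      0 < (Ufun ζ).im := by
    intro ζ hζ
    rw [Set.mem_setOf_eq] at hζ
    rw [imU]
    have hc := Real.cosh_pos (2 * ζ.re)
    rw [div_sub_div _ _ hc.ne' (by norm_num : (4:ℝ) ≠ 0)]
    apply div_pos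
    · nlinarith
    · positivity
  refine ⟨hmem, ?_, ?_⟩
  · intro ζ hζ
    have hb := hmem ζ hζ
    have hBc : 4 * Real.cosh (2 * ζ.re) * (Ufun ζ).im
        = 4 * ζ.im ^ 2 - Real.cosh (2 * ζ.re) ^ 2 := by
      rw [imU]
      have hc := (Real.cosh_pos (2 * ζ.re)).ne'
      field_simp
    have hWB : (fun w => wderivBar Ufun w) = Vfun := funext wderivBar_Ufun
    rw [hWB, wderiv_Vfun, wderivBar_Ufun]
    beta_reduce
    rw [wderiv_Flog (Ufun ζ) hb.ne', wderiv_Ufun]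
    simp only [Vfun]
    have hc := (Real.cosh_pos (2 * ζ.re)).ne'
    have key := Real.cosh_sq_sub_sinh_sq (2 * ζ.re)
    set B := (Ufun ζ).im with hBd
    set c := Real.cosh (2 * ζ.re) with hcd
    set s := Real.sinh (2 * ζ.re) with hsd
    set y := ζ.im with hyd
    have hBne : B ≠ 0 := hb.ne'
    rw [Complex.ext_iff]
    constructor
    · simp only [Complex.add_re, Complex.mul_re, Complex.mul_im, Complex.add_im,
        Complex.I_re, Complex.I_im, Complex.ofReal_re, Complex.ofReal_im, Complex.zero_re]
      field_simp
      linear_combination (-32 * s * y ^ 2 + 8 * c ^ 2 * s) * hBc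
    · simp only [Complex.add_re, Complex.mul_re, Complex.mul_im, Complex.add_im,
        Complex.I_re, Complex.I_im, Complex.ofReal_re, Complex.ofReal_im, Complex.zero_im]
      field_simp
      linear_combination
        (64 * y ^ 4 - 32 * c ^ 2 * y ^ 2 + 4 * c ^ 4) * key
          + (-32 * y ^ 2 + 8 * c ^ 2 + 16 * c ^ 2 * y ^ 2 - 4 * c ^ 4) * hBc
  · intro ζ hζ
    have hb := hmem ζ hζ
    have hbne : ζ.im ^ 2 / Real.cosh (2 * ζ.re) - Real.cosh (2 * ζ.re) / 4 ≠ 0 := by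
      rw [imU] at hb; exact hb.ne'
    have hBc : 4 * Real.cosh (2 * ζ.re) * (Ufun ζ).im
        = 4 * ζ.im ^ 2 - Real.cosh (2 * ζ.re) ^ 2 := by
      rw [imU]
      have hc := (Real.cosh_pos (2 * ζ.re)).ne'
      field_simp
    have hHopf : wderiv Ufun ζ * wderiv (fun w => starRingEnd ℂ (Ufun w)) ζ
        = (((Ufun ζ).im ^ 2 : ℝ) : ℂ) := by
      rw [wderiv_Ufun, wderiv_conjUfun]
      have hc := (Real.cosh_pos (2 * ζ.re)).ne'
      have key := Real.cosh_sq_sub_sinh_sq (2 * ζ.re)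
      set B := (Ufun ζ).im with hBd
      set c := Real.cosh (2 * ζ.re) with hcd
      set s := Real.sinh (2 * ζ.re) with hsd
      set y := ζ.im with hyd
      rw [Complex.ext_iff]
      constructor
      · simp only [Complex.add_re, Complex.mul_re, Complex.mul_im, Complex.add_im,
          Complex.I_re, Complex.I_im, Complex.ofReal_re, Complex.ofReal_im]
        field_simp
        linear_combination (-c ^ 4 + 8 * y ^ 2 * c ^ 2 - 16 * y ^ 4) * key
          + (-4 * c ^ 3 * B + c ^ 4 - 4 * y ^ 2 * c ^ 2) * hBc
      · simp only [Complex.add_re, Complex.mul_re, Complex.mul_im, Complex.add_im,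
          Complex.I_re, Complex.I_im, Complex.ofReal_re, Complex.ofReal_im]
        field_simp
        ring
    refine ⟨hHopf, ?_⟩
    have hexp : Complex.exp ((((fun w : ℂ => -2 * Real.log w.im) (Ufun ζ) : ℝ)) : ℂ)
        = ((((Ufun ζ).im ^ 2)⁻¹ : ℝ) : ℂ) := by
      simp only
      rw [← Complex.ofReal_exp]
      congr 1
      rw [show -2 * Real.log (Ufun ζ).im = Real.log (((Ufun ζ).im ^ 2)⁻¹) by
        rw [Real.log_inv, Real.log_pow]; push_cast; ring]
      exact Real.exp_log (by positivity)
    rw [mul_assoc, hHopf, hexp]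
    rw [← Complex.ofReal_mul]
    rw [inv_mul_cancel₀ (by positivity)]
    norm_num
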